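/- The pair (u*, λ*) := (−Kz, −Lz) satisfies, for every z ∈ ℝⁿ, the linear system [[R + DᵀPB, DᵀPC],[GB, GC]] · (u*, λ*) = −[[DᵀP],[G]] · Az; that is, (R + DᵀPB)u* + DᵀPCλ* = −DᵀPAz and GBu* + GCλ* = −GAz. -/

import Mathlib

open Matrix

/-- The pair `(u*, lam*) = (-K z, -L z)` satisfies, for every `z`, the linear system
`(R + Dᵀ P B) u* + Dᵀ P C lam* = -Dᵀ P A z` and `G B u* + G C lam* = -G A z`. -/
theorem feedback_satisfies_system {n m p : ℕ}
    (A : Matrix (Fin n) (Fin n) ℝ) (B : Matrix (Fin n) (Fin m) ℝ)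
    (C : Matrix (Fin n) (Fin p) ℝ) (G : Matrix (Fin p) (Fin n) ℝ)
    (hGC : IsUnit (G * C))
    (M : Matrix (Fin n) (Fin n) ℝ)
    (hM : M = 1 - C * (G * C)⁻¹ * G)
    (D : Matrix (Fin n) (Fin m) ℝ)
    (hD : D = B - C * (G * C)⁻¹ * (G * B))
    (Q : Matrix (Fin n) (Fin n) ℝ) (hQ : Q.PosSemidef)
    (R : Matrix (Fin m) (Fin m) ℝ) (hR : R.PosDef)
    (P : Matrix (Fin n) (Fin n) ℝ) (hP : P.PosSemidef)
    (K : Matrix (Fin m) (Fin n) ℝ)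
    (hK : K = (R + Dᵀ * P * D)⁻¹ * (Dᵀ * P * M * A))
    (L : Matrix (Fin p) (Fin n) ℝ)
    (hL : L = (G * C)⁻¹ * (G * (A - B * K))) :
    ∀ z : Fin n → ℝ,
      (R + Dᵀ * P * B) *ᵥ (-(K *ᵥ z)) + (Dᵀ * P * C) *ᵥ (-(L *ᵥ z)) =
          -((Dᵀ * P * A) *ᵥ z) ∧
        (G * B) *ᵥ (-(K *ᵥ z)) + (G * C) *ᵥ (-(L *ᵥ z)) = -((G * A) *ᵥ z) := by
  -- invertibility facts
  have hdet : IsUnit (G * C).det := (Matrix.isUnit_iff_isUnit_det _).mp hGC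
  have hGCinv : (G * C) * (G * C)⁻¹ = 1 := Matrix.mul_nonsing_inv _ hdet
  -- R + Dᵀ P D is positive definite hence invertible
  have hDPD : (Dᵀ * P * D).PosSemidef := by
    have := hP.conjTranspose_mul_mul_same D
    simpa [Matrix.conjTranspose_eq_transpose_of_trivial] using this
  have hRD : (R + Dᵀ * P * D).PosDef := hR.add_posSemidef hDPD
  have hRDinv : (R + Dᵀ * P * D) * (R + Dᵀ * P * D)⁻¹ = 1 :=
    Matrix.mul_nonsing_inv _ ((Matrix.isUnit_iff_isUnit_det _).mp hRD.isUnit)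
  -- key: (R + DᵀPD) K = DᵀPM A
  have hKeq : (R + Dᵀ * P * D) * K = Dᵀ * P * M * A := by
    rw [hK, ← Matrix.mul_assoc, hRDinv, Matrix.one_mul]
  -- M B = D
  have hMB : M * B = D := by
    rw [hM, hD]
    simp only [Matrix.sub_mul, Matrix.one_mul, Matrix.mul_assoc]
  -- G C L = G A - G B K
  have hGCL : G * C * L = G * A - G * B * K := by
    rw [hL, ← Matrix.mul_assoc, hGCinv, Matrix.one_mul]
    simp only [Matrix.mul_sub, Matrix.mul_assoc]
  -- C L = (1 - M)(A - B K)
  have hCL : C * L = (1 - M) * (A - B * K) := by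
    rw [hM, hL]
    simp only [sub_sub_cancel, Matrix.mul_assoc]
  -- matrix-level first equation
  have E1 : (R + Dᵀ * P * B) * K + Dᵀ * P * C * L = Dᵀ * P * A := by
    have h1 : Dᵀ * P * C * L = Dᵀ * P * ((1 - M) * (A - B * K)) := by
      rw [Matrix.mul_assoc (Dᵀ * P) C L, hCL]
    rw [h1]
    have expand : Dᵀ * P * ((1 - M) * (A - B * K))
        = Dᵀ * P * A - Dᵀ * P * B * K - Dᵀ * P * M * A + Dᵀ * P * (M * B) * K := by
      simp only [Matrix.mul_sub, Matrix.sub_mul, Matrix.one_mul, Matrix.mul_assoc]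
      abel
    rw [expand, hMB]
    have : (R + Dᵀ * P * B) * K + (Dᵀ * P * A - Dᵀ * P * B * K - Dᵀ * P * M * A
        + Dᵀ * P * D * K) = (R + Dᵀ * P * D) * K + Dᵀ * P * A - Dᵀ * P * M * A := by
      simp only [Matrix.add_mul]
      abel
    rw [this, hKeq]
    abel
  -- matrix-level second equation
  have E2 : G * B * K + G * C * L = G * A := by
    rw [hGCL]; abel
  intro z
  constructor
  · calc (R + Dᵀ * P * B) *ᵥ (-(K *ᵥ z)) + (Dᵀ * P * C) *ᵥ (-(L *ᵥ z))
        = -(((R + Dᵀ * P * B) * K + Dᵀ * P * C * L) *ᵥ z) := by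
          simp [Matrix.add_mulVec, Matrix.mulVec_neg, Matrix.mulVec_mulVec]
          abel
      _ = -((Dᵀ * P * A) *ᵥ z) := by rw [E1]
  · calc (G * B) *ᵥ (-(K *ᵥ z)) + (G * C) *ᵥ (-(L *ᵥ z))
        = -((G * B * K + G * C * L) *ᵥ z) := by
          simp [Matrix.add_mulVec, Matrix.mulVec_neg, Matrix.mulVec_mulVec]
          abel
      _ = -((G * A) *ᵥ z) := by rw [E2]
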